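/- Let r ≥ 2 and let n, m be positive integers. Let A and B be invertible r×r complex matrices with A^n = B^m, and suppose the pair (A, B) is irreducible. Then: (a) A and B are each diagonalizable; (b) there exists a nonzero complex number ϖ such that A^n = B^m = ϖ·Id; (c) neither A nor B is a scalar multiple of the identity matrix; and (d) if moreover det A = det B = 1, then ϖ^r = 1. -/

import Mathlib

open Module Module.End Matrix

/-- Any complex matrix satisfying `A ^ n = ϖ • 1` with `ϖ ≠ 0`, `n > 0` is diagonalizable. -/
lemma aux_diag {r n : ℕ} (hn : 0 < n) {ϖ : ℂ} (hϖ : ϖ ≠ 0)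
    (A : Matrix (Fin r) (Fin r) ℂ) (h : A ^ n = ϖ • 1) :
    ∃ P : Matrix (Fin r) (Fin r) ℂ, ∃ d : Fin r → ℂ,
      IsUnit P ∧ P⁻¹ * A * P = Matrix.diagonal d := by
  classical
  set f : Module.End ℂ (Fin r → ℂ) := Matrix.toLinAlgEquiv' A with hf
  have hfn : f ^ n = (algebraMap ℂ (Module.End ℂ (Fin r → ℂ))) ϖ := by
    rw [hf, ← map_pow, h, Algebra.algebraMap_eq_smul_one, _root_.map_smul, _root_.map_one]
  -- f is a root of the squarefree polynomial X^n - C ϖ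
  have haev : Polynomial.aeval f (Polynomial.X ^ n - Polynomial.C ϖ) = 0 := by
    simp [hfn]
  have hsq : Squarefree (Polynomial.X ^ n - Polynomial.C ϖ) :=
    (Polynomial.separable_X_pow_sub_C ϖ (by exact_mod_cast hn.ne') hϖ).squarefree
  have hss : f.IsSemisimple := isSemisimple_of_squarefree_aeval_eq_zero hsq haev
  have hsup : ⨆ μ : ℂ, f.eigenspace μ = ⊤ := by
    have := Module.End.iSup_maxGenEigenspace_eq_top f
    rw [← this]
    refine iSup_congr fun μ => ?_
    exact (hss.isFinitelySemisimple.maxGenEigenspace_eq_eigenspace μ).symm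
  -- eigenvalues are n-th roots of ϖ
  set S : Set ℂ := {μ : ℂ | μ ^ n = ϖ} with hS
  have hfinS : S.Finite := by
    refine Set.Finite.subset (Polynomial.nthRoots n ϖ).toFinset.finite_toSet fun μ hμ => ?_
    have : μ ∈ Polynomial.nthRoots n ϖ := (Polynomial.mem_nthRoots hn).mpr hμ
    simpa using this
  haveI : Fintype S := hfinS.fintype
  have heig : ∀ μ : ℂ, f.eigenspace μ ≠ ⊥ → μ ∈ S := by
    intro μ hne
    obtain ⟨v, hv⟩ := Module.End.HasEigenvalue.exists_hasEigenvector hne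
    have h1 : (f ^ n) v = μ ^ n • v := Module.End.HasEigenvector.pow_apply hv n
    have h2 : (f ^ n) v = ϖ • v := by
      rw [hfn]; simp [Algebra.algebraMap_eq_smul_one]
    have : (μ ^ n - ϖ) • v = 0 := by
      rw [sub_smul, h1.symm.trans h2, sub_self]
    rcases smul_eq_zero.mp this with h3 | h3
    · exact sub_eq_zero.mp h3
    · exact absurd h3 hv.2
  have hsup' : ⨆ μ : S, f.eigenspace μ.1 = ⊤ := by
    refine le_antisymm le_top ?_
    rw [← hsup]
    refine iSup_le fun μ => ?_
    by_cases hb : f.eigenspace μ = ⊥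
    · simp [hb]
    · exact le_iSup_of_le ⟨μ, heig μ hb⟩ le_rfl
  have hind : iSupIndep fun μ : S => f.eigenspace μ.1 :=
    f.eigenspaces_iSupIndep.comp Subtype.val_injective
  have hint : DirectSum.IsInternal fun μ : S => f.eigenspace μ.1 :=
    DirectSum.isInternal_submodule_of_iSupIndep_of_iSup_eq_top hind hsup'
  let v : ∀ μ : S, Basis (Fin (finrank ℂ (f.eigenspace μ.1))) ℂ (f.eigenspace μ.1) :=
    fun μ => finBasis ℂ _
  let b0 := hint.collectedBasis v
  have hcard : Fintype.card (Σ μ : S, Fin (finrank ℂ (f.eigenspace μ.1))) = r := by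
    have h1 := Module.finrank_eq_card_basis b0
    have h2 : finrank ℂ (Fin r → ℂ) = r := by simp
    omega
  let e := Fintype.equivFinOfCardEq hcard
  let b := b0.reindex e
  have hPmat : Matrix.of (fun i j => b j i) = (Pi.basisFun ℂ (Fin r)).toMatrix ⇑b := by
    ext i j
    simp [Basis.toMatrix_apply]
  have hPu : IsUnit (Matrix.of fun i j => b j i) := by
    rw [hPmat]
    haveI := (Pi.basisFun ℂ (Fin r)).invertibleToMatrix b
    exact isUnit_of_invertible _
  refine ⟨Matrix.of fun i j => b j i, fun j => ((e.symm j).1 : ℂ), hPu, ?_⟩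
  have hbd : ∀ j : Fin r, A.mulVec (b j) = ((e.symm j).1 : ℂ) • b j := by
    intro j
    have hbj : b j = (b0 (e.symm j) : Fin r → ℂ) := by
      rw [Basis.reindex_apply]
    have hm : (b0 (e.symm j) : Fin r → ℂ) ∈ f.eigenspace ((e.symm j).1 : ℂ) :=
      hint.collectedBasis_mem v (e.symm j)
    have h2 := Module.End.mem_eigenspace_iff.mp hm
    rw [hbj]
    rw [← h2]
    rfl
  set P : Matrix (Fin r) (Fin r) ℂ := Matrix.of fun i j => b j i with hP
  have hAP : A * P = P * Matrix.diagonal fun j => ((e.symm j).1 : ℂ) := by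
    ext i k
    have h1 : (A * P) i k = A.mulVec (b k) i := by
      simp [Matrix.mul_apply, Matrix.mulVec, dotProduct, hP]
    rw [h1, hbd k, Matrix.mul_diagonal, Pi.smul_apply, smul_eq_mul, mul_comm]
    rfl
  rw [mul_assoc, hAP, ← mul_assoc,
    Matrix.nonsing_inv_mul _ (Matrix.isUnit_iff_isUnit_det P |>.mp hPu), one_mul]

/-- Let `r ≥ 2` and let `n, m` be positive integers. Let `A` and `B` be invertible `r×r`
complex matrices with `A^n = B^m`, and suppose the pair `(A, B)` is irreducible (the only
subspaces of `ℂ^r` invariant under both are `0` and `ℂ^r`). Then: (a) `A` and `B` are each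
diagonalizable; (b) there is `ϖ ≠ 0` with `A^n = B^m = ϖ·Id`; (c) neither `A` nor `B` is a
scalar multiple of the identity; (d) if moreover `det A = det B = 1`, then `ϖ^r = 1`. -/
theorem stmt_2 (r n m : ℕ) (hr : 2 ≤ r) (hn : 0 < n) (hm : 0 < m)
    (A B : Matrix (Fin r) (Fin r) ℂ) (hA : IsUnit A) (hB : IsUnit B)
    (hAB : A ^ n = B ^ m)
    (hirr : ∀ V : Submodule ℂ (Fin r → ℂ),
      (∀ v ∈ V, A.mulVec v ∈ V) → (∀ v ∈ V, B.mulVec v ∈ V) → V = ⊥ ∨ V = ⊤) :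
    (∃ P : Matrix (Fin r) (Fin r) ℂ, ∃ d : Fin r → ℂ,
        IsUnit P ∧ P⁻¹ * A * P = Matrix.diagonal d) ∧
    (∃ Q : Matrix (Fin r) (Fin r) ℂ, ∃ e : Fin r → ℂ,
        IsUnit Q ∧ Q⁻¹ * B * Q = Matrix.diagonal e) ∧
    (∀ c : ℂ, A ≠ c • (1 : Matrix (Fin r) (Fin r) ℂ)) ∧
    (∀ c : ℂ, B ≠ c • (1 : Matrix (Fin r) (Fin r) ℂ)) ∧
    ∃ ϖ : ℂ, ϖ ≠ 0 ∧ A ^ n = ϖ • (1 : Matrix (Fin r) (Fin r) ℂ) ∧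
      B ^ m = ϖ • (1 : Matrix (Fin r) (Fin r) ℂ) ∧
      (A.det = 1 → B.det = 1 → ϖ ^ r = 1) := by
  classical
  haveI : NeZero r := ⟨by omega⟩
  haveI : Nonempty (Fin r) := ⟨⟨0, by omega⟩⟩
  -- Step 1: A^n = ϖ • 1 for some ϖ ≠ 0
  obtain ⟨ϖ, hϖ0, hC⟩ : ∃ ϖ : ℂ, ϖ ≠ 0 ∧ A ^ n = ϖ • (1 : Matrix (Fin r) (Fin r) ℂ) := by
    set g : Module.End ℂ (Fin r → ℂ) := Matrix.toLin' (A ^ n) with hg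
    obtain ⟨μ, hμ⟩ := Module.End.exists_eigenvalue g
    set V := g.eigenspace μ with hV
    have hmem : ∀ v, v ∈ V ↔ (A ^ n).mulVec v = μ • v := by
      intro v
      rw [hV, Module.End.mem_eigenspace_iff]
      rw [hg, Matrix.toLin'_apply]
    have hinvA : ∀ v ∈ V, A.mulVec v ∈ V := by
      intro v hv
      rw [hmem] at hv ⊢
      rw [Matrix.mulVec_mulVec, ← pow_succ, pow_succ', ← Matrix.mulVec_mulVec, hv,
        Matrix.mulVec_smul]
    have hinvB : ∀ v ∈ V, B.mulVec v ∈ V := by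
      intro v hv
      rw [hmem] at hv ⊢
      rw [Matrix.mulVec_mulVec, hAB, ← pow_succ, pow_succ', ← Matrix.mulVec_mulVec, ← hAB, hv,
        Matrix.mulVec_smul]
    rcases hirr V hinvA hinvB with hbot | htop
    · exact absurd hbot hμ
    · have hall : ∀ v : Fin r → ℂ, (A ^ n).mulVec v = μ • v := by
        intro v
        exact (hmem v).mp (htop ▸ Submodule.mem_top)
      have heq : A ^ n = μ • (1 : Matrix (Fin r) (Fin r) ℂ) := by
        ext i j
        have := congrFun (hall (Pi.single j 1)) i
        simpa [Matrix.mulVec_single, Matrix.smul_apply, Matrix.one_apply, Pi.single_apply,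
          eq_comm, mul_comm] using this
      have hμ0 : μ ≠ 0 := by
        intro h0
        have : IsUnit (A ^ n) := hA.pow n
        rw [heq, h0, zero_smul] at this
        exact not_isUnit_zero this
      exact ⟨μ, hμ0, heq⟩
  -- Step 2: not scalar
  have hnotscalar : ∀ (M N : Matrix (Fin r) (Fin r) ℂ),
      (∀ V : Submodule ℂ (Fin r → ℂ),
        (∀ v ∈ V, M.mulVec v ∈ V) → (∀ v ∈ V, N.mulVec v ∈ V) → V = ⊥ ∨ V = ⊤) →
      ∀ c : ℂ, M ≠ c • (1 : Matrix (Fin r) (Fin r) ℂ) := by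
    intro M N hirr' c hMc
    obtain ⟨μ, hμ⟩ := Module.End.exists_eigenvalue (Matrix.toLin' N)
    obtain ⟨w, hw⟩ := Module.End.HasEigenvalue.exists_hasEigenvector hμ
    have hwN : N.mulVec w = μ • w := by
      have := Module.End.mem_eigenspace_iff.mp hw.1
      simpa [Matrix.toLin'_apply] using this
    set V : Submodule ℂ (Fin r → ℂ) := ℂ ∙ w with hV
    have hinvM : ∀ v ∈ V, M.mulVec v ∈ V := by
      intro v hv
      rw [hMc]
      have : (c • (1 : Matrix (Fin r) (Fin r) ℂ)).mulVec v = c • v := by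
        rw [Matrix.smul_mulVec, Matrix.one_mulVec]
      rw [this]
      exact V.smul_mem c hv
    have hinvN : ∀ v ∈ V, N.mulVec v ∈ V := by
      intro v hv
      rw [hV, Submodule.mem_span_singleton] at hv
      obtain ⟨a, rfl⟩ := hv
      rw [Matrix.mulVec_smul, hwN]
      exact V.smul_mem a (V.smul_mem μ (Submodule.mem_span_singleton_self w))
    rcases hirr' V hinvM hinvN with hbot | htop
    · have : w ∈ V := Submodule.mem_span_singleton_self w
      rw [hbot, Submodule.mem_bot] at this
      exact hw.2 this
    · have h1 : finrank ℂ V = 1 := finrank_span_singleton hw.2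
      rw [htop] at h1
      have h2 : finrank ℂ (⊤ : Submodule ℂ (Fin r → ℂ)) = r := by simp
      omega
  have hirr' : ∀ V : Submodule ℂ (Fin r → ℂ),
      (∀ v ∈ V, B.mulVec v ∈ V) → (∀ v ∈ V, A.mulVec v ∈ V) → V = ⊥ ∨ V = ⊤ :=
    fun V h1 h2 => hirr V h2 h1
  refine ⟨aux_diag hn hϖ0 A hC, aux_diag hm hϖ0 B (hAB ▸ hC),
    hnotscalar A B hirr, hnotscalar B A hirr', ϖ, hϖ0, hC, hAB ▸ hC, ?_⟩
  intro hdA _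
  have := congrArg Matrix.det hC
  rw [Matrix.det_pow, hdA, one_pow, Matrix.det_smul, Matrix.det_one, mul_one] at this
  simp only [Fintype.card_fin] at this
  exact this.symm
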